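/- Let Ω be a topological space, let n be a positive integer, let f₁, …, fₙ : Ω → ℝ be continuous functions with fᵢ ≥ 0, and let h₁, …, hₙ : Ω → ℝ be bounded functions with hᵢ ≥ 0. Then ‖ Σᵢ fᵢ·hᵢ ‖ₑ ≤ ( sup_{ω ∈ Ω} Σᵢ fᵢ(ω) ) · maxᵢ ‖hᵢ‖ₑ, where (fᵢ·hᵢ)(ω) = fᵢ(ω)hᵢ(ω). -/

import Mathlib

open scoped BigOperators

/-- The essential norm of a nonnegative function `h` on a topological space:
the infimum of the bounds of `h` over open dense subsets, i.e.
`inf { sup_{ω ∈ Δ} h ω : Δ open dense }`. -/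
noncomputable def essNorm {Ω : Type*} [TopologicalSpace Ω] (h : Ω → ℝ) : ℝ :=
  sInf {c : ℝ | ∃ Δ : Set Ω, IsOpen Δ ∧ Dense Δ ∧ ∀ ω ∈ Δ, h ω ≤ c}

private lemma dense_iInter_fin {Ω : Type*} [TopologicalSpace Ω] {ι : Type*} (s : Finset ι)
    (Δ : ι → Set Ω) (ho : ∀ i, IsOpen (Δ i)) (hd : ∀ i, Dense (Δ i)) :
    Dense (⋂ i ∈ s, Δ i) := by
  classical
  induction s using Finset.induction_on with
  | empty => simp [dense_univ]
  | insert a t hx ih =>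
      rw [Finset.set_biInter_insert]
      exact (hd a).inter_of_isOpen_left ih (ho a)

/-- Lemma 3.4 (absolute C(Ω)-convexity estimate): for continuous nonnegative `f₁, …, fₙ`
and bounded nonnegative `h₁, …, hₙ`,
`‖ Σᵢ fᵢ·hᵢ ‖ₑ ≤ (sup_ω Σᵢ fᵢ(ω)) · maxᵢ ‖hᵢ‖ₑ`. -/
theorem stmt_5 {Ω : Type*} [TopologicalSpace Ω] (n : ℕ) (hn : 0 < n)
    (f h : Fin n → Ω → ℝ)
    (hf : ∀ i, Continuous (f i)) (hf0 : ∀ i ω, 0 ≤ f i ω)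
    (hhb : ∀ i, ∃ C, ∀ ω, h i ω ≤ C) (hh0 : ∀ i ω, 0 ≤ h i ω)
    (hfb : BddAbove (Set.range fun ω => ∑ i, f i ω)) :
    essNorm (fun ω => ∑ i, f i ω * h i ω) ≤
      (⨆ ω, ∑ i, f i ω) * ⨆ i, essNorm (h i) := by
  classical
  have hFin : Nonempty (Fin n) := ⟨⟨0, hn⟩⟩
  by_cases hΩ : Nonempty Ω
  case neg =>
    -- Ω is empty: both sides are 0.
    have hEmpty : IsEmpty Ω := not_nonempty_iff.mp hΩ
    have hS : {c : ℝ | ∃ Δ : Set Ω, IsOpen Δ ∧ Dense Δ ∧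
        ∀ ω ∈ Δ, (fun ω => ∑ i, f i ω * h i ω) ω ≤ c} = Set.univ := by
      ext c
      simp only [Set.mem_setOf_eq, Set.mem_univ, iff_true]
      exact ⟨∅, isOpen_empty, fun x => (hEmpty.false x).elim, fun ω hω => by simp at hω⟩
    have hL : essNorm (fun ω => ∑ i, f i ω * h i ω) = 0 := by
      rw [essNorm, hS, Real.sInf_of_not_bddBelow not_bddBelow_univ]
    have hR : (⨆ ω : Ω, ∑ i, f i ω) = 0 := Real.iSup_of_isEmpty _
    rw [hL, hR, zero_mul]
  case pos =>
    haveI := hΩ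
    obtain ⟨ω₀⟩ := hΩ
    set F : ℝ := ⨆ ω, ∑ i, f i ω with hF
    set M : ℝ := ⨆ i, essNorm (h i) with hM
    have hFle : ∀ ω, ∑ i, f i ω ≤ F := fun ω => le_ciSup hfb ω
    have hF0 : 0 ≤ F := le_trans (Finset.sum_nonneg fun i _ => hf0 i ω₀) (hFle ω₀)
    -- each set S i is nonempty and bounded below by 0
    have hSne : ∀ i : Fin n, ∃ c, c ∈ {c : ℝ | ∃ Δ : Set Ω, IsOpen Δ ∧ Dense Δ ∧
        ∀ ω ∈ Δ, h i ω ≤ c} := by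
      intro i
      obtain ⟨C, hC⟩ := hhb i
      exact ⟨C, Set.univ, isOpen_univ, dense_univ, fun ω _ => hC ω⟩
    have hMbdd : BddAbove (Set.range fun i : Fin n => essNorm (h i)) :=
      (Set.finite_range _).bddAbove
    have hMle : ∀ i, essNorm (h i) ≤ M := fun i => le_ciSup hMbdd i
    -- main estimate: for every ε > 0
    have key : ∀ ε > (0:ℝ), essNorm (fun ω => ∑ i, f i ω * h i ω) ≤ F * M + F * ε := by
      intro ε hε
      have hc : ∀ i : Fin n, ∃ c, (∃ Δ : Set Ω, IsOpen Δ ∧ Dense Δ ∧ ∀ ω ∈ Δ, h i ω ≤ c)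
          ∧ c ≤ M + ε := by
        intro i
        obtain ⟨c, hcS, hclt⟩ := Real.lt_sInf_add_pos (hSne i) hε
        exact ⟨c, hcS, le_trans hclt.le (by have := hMle i; rw [essNorm] at this; linarith)⟩
      choose c hcS hcle using hc
      choose Δ hΔo hΔd hΔb using hcS
      have hΔ : Dense (⋂ i ∈ Finset.univ, Δ i) := dense_iInter_fin _ Δ hΔo hΔd
      have hΔopen : IsOpen (⋂ i ∈ Finset.univ, Δ i) :=
        isOpen_biInter_finset fun i _ => hΔo i
      have hbound : ∀ ω ∈ ⋂ i ∈ Finset.univ, Δ i,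
          ∑ i, f i ω * h i ω ≤ F * M + F * ε := by
        intro ω hω
        simp only [Set.mem_iInter] at hω
        calc ∑ i, f i ω * h i ω ≤ ∑ i, f i ω * (M + ε) := by
              refine Finset.sum_le_sum fun i _ => ?_
              exact mul_le_mul_of_nonneg_left
                (le_trans (hΔb i ω (hω i (Finset.mem_univ i))) (hcle i)) (hf0 i ω)
          _ = (∑ i, f i ω) * (M + ε) := by rw [Finset.sum_mul]
          _ ≤ F * (M + ε) := by
              have hMε : 0 ≤ M + ε := by
                have h0 : 0 ≤ h ⟨0, hn⟩ ω := hh0 _ ω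
                have : 0 ≤ c ⟨0, hn⟩ := le_trans h0 (hΔb _ ω (hω _ (Finset.mem_univ _)))
                linarith [hcle (⟨0, hn⟩ : Fin n)]
              exact mul_le_mul_of_nonneg_right (hFle ω) hMε
          _ = F * M + F * ε := by ring
      -- the full set is bounded below by 0 (since h ≥ 0, f ≥ 0, Ω nonempty & dense sets hit it)
      have hbdd : BddBelow {c : ℝ | ∃ Δ : Set Ω, IsOpen Δ ∧ Dense Δ ∧
          ∀ ω ∈ Δ, (fun ω => ∑ i, f i ω * h i ω) ω ≤ c} := by
        refine ⟨0, fun b hb => ?_⟩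
        obtain ⟨Δ', hΔ'o, hΔ'd, hΔ'b⟩ := hb
        obtain ⟨ω, hω⟩ := hΔ'd.nonempty
        exact le_trans (Finset.sum_nonneg fun i _ => mul_nonneg (hf0 i ω) (hh0 i ω)) (hΔ'b ω hω)
      exact csInf_le hbdd ⟨_, hΔopen, hΔ, hbound⟩
    -- conclude
    refine le_of_forall_pos_le_add fun δ hδ => ?_
    have hε : (0:ℝ) < δ / (F + 1) := div_pos hδ (by linarith)
    have := key _ hε
    have hFεδ : F * (δ / (F + 1)) ≤ δ := by
      rw [mul_div_assoc'] at *
      rw [div_le_iff₀ (by linarith : (0:ℝ) < F + 1)]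
      nlinarith
    linarith
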